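/- Let u be a matched vertex and let E be an execution of the algorithm MaxMatch. For every configuration C of E that occurs at or after a transition of E in which u executed some rule: if s_u = True in C, then there exists x ∈ single(N(u)) with p_u = x and p_x = u in C. -/

import Mathlib

open Classical

section MaxMatchPreamble

variable {V : Type*} [Fintype V] [LinearOrder V]

/-- Strict comparison on identifiers where `none` (null) counts as greater
than every identifier. -/
def optLT : Option V → Option V → Prop
  | some x, some y => x < y
  | some _, none => True
  | none, _ => False

/-- A configuration of the MaxMatch algorithm: the variables `p`, `α`, `β`
(`a`,`b` here) and the booleans `s`, `end` (`e` here) of every vertex. -/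
structure MMConfig (V : Type*) where
  p : V → Option V
  a : V → Option V
  b : V → Option V
  s : V → Bool
  e : V → Bool

/-- The local state of one vertex. -/
structure MMLocal (V : Type*) where
  p : Option V
  a : Option V
  b : Option V
  s : Bool
  e : Bool

/-- The local state of vertex `u` in configuration `C`. -/
def MMConfig.loc (C : MMConfig V) (u : V) : MMLocal V :=
  ⟨C.p u, C.a u, C.b u, C.s u, C.e u⟩

/-- `m` encodes a maximal matching of `G`: `m u = some v` iff `(u,v)` is a
matching edge, `m u = none` iff `u` is single. -/
structure MaxMatchingOn (G : SimpleGraph V) (m : V → Option V) : Prop where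
  adj : ∀ u v, m u = some v → G.Adj u v
  symm : ∀ u v, m u = some v → m v = some u
  maximal : ∀ u v, G.Adj u v → m u ≠ none ∨ m v ≠ none

/-- `Lowest(S)`: the minimum-identifier element of `S`, `none` if `S = ∅`. -/
noncomputable def lowestSet (S : Set V) : Option V :=
  if h : (Finset.univ.filter fun x => x ∈ S).Nonempty
  then some ((Finset.univ.filter fun x => x ∈ S).min' h) else none

/-- `Lowest` of a finite set of identifiers-or-null: `none` (null) elements are
greater than all identifiers, hence ignored. -/
noncomputable def lowestOpt (S : Finset (Option V)) : Option V :=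
  lowestSet {x : V | some x ∈ S}

/-- Truth value of a proposition. -/
noncomputable def pb (P : Prop) : Bool := if P then true else false

variable (G : SimpleGraph V) (m : V → Option V)

/-- The candidate set considered by `BestRematch(u)`. -/
def candSet (C : MMConfig V) (u : V) : Set V :=
  {x | G.Adj u x ∧ m x = none ∧ (C.p x = some u ∨ C.e x = false)}

/-- `BestRematch(u)`. -/
noncomputable def bestRematch (C : MMConfig V) (u : V) : Option V × Option V :=
  let a := lowestSet (candSet G m C u)
  (a, a.elim none fun w => lowestSet (candSet G m C u \ {w}))

/-- `AskFirst(u)`. -/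
noncomputable def askFirst (C : MMConfig V) (u : V) : Option V :=
  match m u with
  | none => none
  | some v =>
      if C.a u ≠ none ∧ C.a v ≠ none ∧
         2 ≤ ({C.a u, C.b u, C.a v, C.b v} : Finset (Option V)).card ∧
         (optLT (C.a u) (C.a v) ∨ (C.a u = C.a v ∧ C.b u = none) ∨
          (C.a u = C.a v ∧ C.b v ≠ none ∧ u < v))
      then C.a u else none

/-- `AskSecond(u)`. -/
noncomputable def askSecond (C : MMConfig V) (u : V) : Option V :=
  match m u with
  | none => none
  | some v =>
      if askFirst m C v ≠ none
      then lowestOpt (({C.a u, C.b u} : Finset (Option V)) \ {C.a v})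
      else none

/-- `Ask(u)`. -/
noncomputable def ask (C : MMConfig V) (u : V) : Option V :=
  if askFirst m C u = none then askSecond m C u else askFirst m C u

/-- Guard of rule `ResetEnd` (single vertices). -/
def guardResetEnd (C : MMConfig V) (x : V) : Prop :=
  C.p x = none ∧ C.e x = true

/-- Guard of rule `UpdateP` (single vertices). -/
def guardUpdateP (C : MMConfig V) (x : V) : Prop :=
  (C.p x = none ∧ ∃ w, G.Adj x w ∧ m w ≠ none ∧ C.p w = some x) ∨
  (∃ w, C.p x = some w ∧ ¬ (G.Adj x w ∧ m w ≠ none)) ∨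
  (∃ w, C.p x = some w ∧ C.p w ≠ some x)

/-- Guard of rule `UpdateEnd` (single vertices). -/
def guardUpdateEnd (C : MMConfig V) (x : V) : Prop :=
  ∃ w, C.p x = some w ∧ G.Adj x w ∧ m w ≠ none ∧ C.p w = some x ∧ C.e x ≠ C.e w

/-- `o ∈ single(N(u)) ∪ {null}`. -/
def inSNopt (u : V) (o : Option V) : Prop :=
  o = none ∨ ∃ w, o = some w ∧ G.Adj u w ∧ m w = none

/-- First part (first four disjuncts) of the guard of rule `Update`. -/
def guardUpdateA (C : MMConfig V) (u : V) : Prop :=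
  optLT (C.b u) (C.a u) ∨
  (¬ inSNopt G m u (C.a u) ∨ ¬ inSNopt G m u (C.b u)) ∨
  (C.a u = C.b u ∧ C.a u ≠ none) ∨
  ¬ inSNopt G m u (C.p u)

/-- Guard of rule `Update` (matched vertices). -/
def guardUpdate (C : MMConfig V) (u : V) : Prop :=
  guardUpdateA G m C u ∨
  ((C.a u, C.b u) ≠ bestRematch G m C u ∧
    (C.p u = none ∨ ∃ w, C.p u = some w ∧ C.p w ≠ some u ∧ C.e w = true))

/-- `p_{p_u} = u`. -/
def ppEq (C : MMConfig V) (u : V) : Prop :=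
  ∃ w, C.p u = some w ∧ C.p w = some u

/-- Value assigned to `s_u` by `MatchFirst` (`v = m_u`). -/
def mfS (C : MMConfig V) (u v : V) : Prop :=
  C.p u = askFirst m C u ∧ ppEq C u ∧ (C.p v = askSecond m C v ∨ C.p v = none)

/-- Value assigned to `end_u` by `MatchFirst` (`v = m_u`). -/
def mfE (C : MMConfig V) (u v : V) : Prop :=
  C.p u = askFirst m C u ∧ ppEq C u ∧ C.s u = true ∧
  C.p v = askSecond m C v ∧ C.e v = true

/-- Guard of rule `MatchFirst` (matched vertices). -/
def guardMatchFirst (C : MMConfig V) (u : V) : Prop :=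
  askFirst m C u ≠ none ∧ ∃ v, m u = some v ∧
    (C.p u ≠ askFirst m C u ∨ ¬ (C.s u = true ↔ mfS m C u v) ∨
     ¬ (C.e u = true ↔ mfE m C u v))

/-- Value assigned to `end_u` (and then `s_u`) by `MatchSecond` (`v = m_u`). -/
def msE (C : MMConfig V) (u v : V) : Prop :=
  C.p u = askSecond m C u ∧ ppEq C u ∧ C.p v = askFirst m C v

/-- Guard of rule `MatchSecond` (matched vertices). -/
def guardMatchSecond (C : MMConfig V) (u : V) : Prop :=
  askSecond m C u ≠ none ∧ ∃ v, m u = some v ∧ C.s v = true ∧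
    (C.p u ≠ askSecond m C u ∨ ¬ (C.e u = true ↔ msE m C u v) ∨ C.s u ≠ C.e u)

/-- Guard of rule `ResetMatch` (matched vertices). -/
def guardResetMatch (C : MMConfig V) (u : V) : Prop :=
  (askFirst m C u = none ∧ askSecond m C u = none ∧
    ¬ (C.p u = none ∧ C.s u = false ∧ C.e u = false)) ∨
  (askSecond m C u ≠ none ∧ C.p u ≠ none ∧ ∃ v, m u = some v ∧ C.s v = false)

/-- The local state of `u` after it atomically executes the command of its
highest-priority true-guard rule (its state is unchanged if no guard holds). -/
noncomputable def localNext (C : MMConfig V) (u : V) : MMLocal V :=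
  if m u = none then
    if guardResetEnd C u then ⟨C.p u, C.a u, C.b u, C.s u, false⟩
    else if guardUpdateP G m C u then
      ⟨lowestSet {w | G.Adj u w ∧ C.p w = some u}, C.a u, C.b u, C.s u, false⟩
    else if guardUpdateEnd G m C u then
      ⟨C.p u, C.a u, C.b u, C.s u, (C.p u).elim (C.e u) C.e⟩
    else C.loc u
  else
    if guardUpdate G m C u then
      ⟨none, (bestRematch G m C u).1, (bestRematch G m C u).2, false, false⟩
    else if guardMatchFirst m C u then
      ⟨askFirst m C u, C.a u, C.b u,
        pb (∃ v, m u = some v ∧ mfS m C u v),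
        pb (∃ v, m u = some v ∧ mfE m C u v)⟩
    else if guardMatchSecond m C u then
      ⟨askSecond m C u, C.a u, C.b u,
        pb (∃ v, m u = some v ∧ msE m C u v),
        pb (∃ v, m u = some v ∧ msE m C u v)⟩
    else if guardResetMatch m C u then ⟨none, C.a u, C.b u, false, false⟩
    else C.loc u

/-- `u` is activable (eligible for some rule) in `C`. -/
def Activable (C : MMConfig V) (u : V) : Prop :=
  (m u = none ∧ (guardResetEnd C u ∨ guardUpdateP G m C u ∨ guardUpdateEnd G m C u)) ∨
  (m u ≠ none ∧ (guardUpdate G m C u ∨ guardMatchFirst m C u ∨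
    guardMatchSecond m C u ∨ guardResetMatch m C u))

/-- A configuration is stable when no vertex is activable. -/
def Stable (C : MMConfig V) : Prop := ∀ u, ¬ Activable G m C u

/-- One transition of the adversarial distributed daemon: the nonempty set `A`
of activable vertices simultaneously execute their (highest-priority) rules. -/
def StepOn (C C' : MMConfig V) (A : Set V) : Prop :=
  A.Nonempty ∧ (∀ u ∈ A, Activable G m C u) ∧
  (∀ u ∈ A, C'.loc u = localNext G m C u) ∧
  (∀ u, u ∉ A → C'.loc u = C.loc u)

/-- A (maximal) execution, padded with stuttering once a stable configuration is
reached: at each index either a genuine transition occurs, or the configuration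
is stable and nothing moves.  `u ∈ act i` means `u` makes a move in transition
`i ↦ i+1`. -/
structure MMExecution (G : SimpleGraph V) (m : V → Option V) where
  cfg : ℕ → MMConfig V
  act : ℕ → Set V
  valid : ∀ i, StepOn G m (cfg i) (cfg (i+1)) (act i) ∨
    (act i = ∅ ∧ Stable G m (cfg i) ∧ cfg (i+1) = cfg i)

/-- μ: the number of matched vertices. -/
noncomputable def muV : ℕ := (Finset.univ.filter fun u : V => m u ≠ none).card

/-- σ: the number of single vertices. -/
noncomputable def sigmaV : ℕ := (Finset.univ.filter fun u : V => m u = none).card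

/-- The matching `M` as a relation. -/
def Mrel (a b : V) : Prop := m a = some b

/-- The output edge set `M⁺` of a configuration, as a relation. -/
def Mplus (C : MMConfig V) (a b : V) : Prop :=
  (m a = some b ∧ C.p a = none ∧ C.p b = none) ∨
  (G.Adj a b ∧ m a ≠ some b ∧ C.p a = some b ∧ C.p b = some a)

/-- `(x,u,v,y)` is a 3-augmenting path on `(G, M')`. -/
def IsAug3 (M' : V → V → Prop) (x u v y : V) : Prop :=
  x ≠ u ∧ x ≠ v ∧ x ≠ y ∧ u ≠ v ∧ u ≠ y ∧ v ≠ y ∧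
  G.Adj x u ∧ G.Adj u v ∧ G.Adj v y ∧
  M' u v ∧ ¬ M' x u ∧ ¬ M' v y

end MaxMatchPreamble

section Aux
variable {V : Type*} [Fintype V] [LinearOrder V]

lemma lowestSet_mem' {S : Set V} {w : V} (h : lowestSet S = some w) : w ∈ S := by
  unfold lowestSet at h
  split at h
  · next hne =>
      have hmem := Finset.min'_mem _ hne
      have heq : (Finset.univ.filter fun x => x ∈ S).min' hne = w := by injection h
      rw [heq] at hmem
      simpa using hmem
  · exact absurd h (by simp)

lemma pb_true' {P : Prop} : pb P = true ↔ P := by simp [pb]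

lemma askFirst_eq_a' (m : V → Option V) (C : MMConfig V) (u : V)
    (h : askFirst m C u ≠ none) : askFirst m C u = C.a u := by
  unfold askFirst at h ⊢
  cases hmu : m u with
  | none => simp [hmu] at h
  | some v =>
      simp only [hmu] at h ⊢
      split_ifs at h ⊢ with hc
      · rfl
      · exact absurd rfl h

lemma askSecond_mem' (m : V → Option V) (C : MMConfig V) {u v w : V}
    (hmv : m u = some v) (h : askSecond m C u = some w) :
    some w = C.a u ∨ some w = C.b u := by
  unfold askSecond at h
  simp only [hmv] at h
  split_ifs at h with hc
  · unfold lowestOpt at h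
    have hmem := lowestSet_mem' h
    have hmem2 : (some w : Option V) ∈ ({C.a u, C.b u} : Finset (Option V)) :=
      (Finset.mem_sdiff.mp (show (some w : Option V) ∈ ({C.a u, C.b u} : Finset (Option V)) \ {C.a v} from hmem)).1
    simpa using hmem2

lemma inSNopt_some' (G : SimpleGraph V) (m : V → Option V) {u w : V}
    (h : inSNopt G m u (some w)) : G.Adj u w ∧ m w = none := by
  rcases h with h | ⟨w', hw', ha, hmw⟩
  · exact absurd h (by simp)
  · obtain rfl : w = w' := by injection hw'
    exact ⟨ha, hmw⟩

def Inv' (G : SimpleGraph V) (m : V → Option V) (C : MMConfig V) (u : V) : Prop :=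
  C.s u = true → ∃ x, G.Adj u x ∧ m x = none ∧ C.p u = some x ∧ C.p x = some u

lemma singleP' (G : SimpleGraph V) (m : V → Option V)
    {C C' : MMConfig V} {A : Set V} (hstep : StepOn G m C C' A)
    {u x : V} (hmx : m x = none) (hmu : m u ≠ none) (hadj : G.Adj u x)
    (hpx : C.p x = some u) (hpu : C.p u = some x) : C'.p x = some u := by
  by_cases hxA : x ∈ A
  · have hloc := hstep.2.2.1 x hxA
    have hp : C'.p x = (localNext G m C x).p := congrArg MMLocal.p hloc
    rw [hp]
    have hgup : ¬ guardUpdateP G m C x := by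
      rintro (⟨h1, -⟩ | ⟨w, hw, hnot⟩ | ⟨w, hw, hne⟩)
      · rw [hpx] at h1; exact absurd h1 (by simp)
      · rw [hpx] at hw
        obtain rfl : u = w := by injection hw
        exact hnot ⟨hadj.symm, hmu⟩
      · rw [hpx] at hw
        obtain rfl : u = w := by injection hw
        exact hne hpu
    unfold localNext
    rw [if_pos hmx]
    by_cases h1 : guardResetEnd C x
    · rw [if_pos h1]; exact hpx
    · rw [if_neg h1, if_neg hgup]
      by_cases h3 : guardUpdateEnd G m C x
      · rw [if_pos h3]; exact hpx
      · rw [if_neg h3]; exact hpx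
  · have hloc := hstep.2.2.2 x hxA
    have hp : C'.p x = C.p x := congrArg MMLocal.p hloc
    rw [hp]; exact hpx

lemma inv_step' (G : SimpleGraph V) (m : V → Option V)
    {C C' : MMConfig V} {A : Set V} (hstep : StepOn G m C C' A)
    {u : V} (hmu : m u ≠ none)
    (h : u ∈ A ∨ Inv' G m C u) : Inv' G m C' u := by
  intro hs
  by_cases huA : u ∈ A
  · have hloc := hstep.2.2.1 u huA
    have hp : C'.p u = (localNext G m C u).p := congrArg MMLocal.p hloc
    have hsE : C'.s u = (localNext G m C u).s := congrArg MMLocal.s hloc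
    by_cases g1 : guardUpdate G m C u
    · have hL : localNext G m C u =
          ⟨none, (bestRematch G m C u).1, (bestRematch G m C u).2, false, false⟩ := by
        unfold localNext; rw [if_neg hmu, if_pos g1]
      have hsE' : C'.s u = false := by rw [hsE, hL]
      rw [hsE'] at hs; exact Bool.noConfusion hs
    · have hina : inSNopt G m u (C.a u) := by
        by_contra hcon
        exact g1 (Or.inl (Or.inr (Or.inl (Or.inl hcon))))
      have hinb : inSNopt G m u (C.b u) := by
        by_contra hcon
        exact g1 (Or.inl (Or.inr (Or.inl (Or.inr hcon))))
      by_cases g2 : guardMatchFirst m C u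
      · have hL : localNext G m C u =
            ⟨askFirst m C u, C.a u, C.b u,
              pb (∃ v, m u = some v ∧ mfS m C u v),
              pb (∃ v, m u = some v ∧ mfE m C u v)⟩ := by
          unfold localNext; rw [if_neg hmu, if_neg g1, if_pos g2]
        have hsE' : C'.s u = pb (∃ v, m u = some v ∧ mfS m C u v) := by rw [hsE, hL]
        obtain ⟨v, hmv, hpf, ⟨w, hpuw, hpwu⟩, -⟩ := pb_true'.mp (hsE'.symm.trans hs)
        have haf : askFirst m C u = some w := hpf.symm.trans hpuw
        have ha : C.a u = some w := by
          have := askFirst_eq_a' m C u (by rw [haf]; simp)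
          rw [haf] at this; exact this.symm
        rw [ha] at hina
        obtain ⟨hadj, hmw⟩ := inSNopt_some' G m hina
        refine ⟨w, hadj, hmw, ?_, singleP' G m hstep hmw hmu hadj hpwu hpuw⟩
        rw [hp, hL]; exact haf
      · by_cases g3 : guardMatchSecond m C u
        · have hL : localNext G m C u =
              ⟨askSecond m C u, C.a u, C.b u,
                pb (∃ v, m u = some v ∧ msE m C u v),
                pb (∃ v, m u = some v ∧ msE m C u v)⟩ := by
            unfold localNext; rw [if_neg hmu, if_neg g1, if_neg g2, if_pos g3]
          have hsE' : C'.s u = pb (∃ v, m u = some v ∧ msE m C u v) := by rw [hsE, hL]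
          obtain ⟨v, hmv, hpf, ⟨w, hpuw, hpwu⟩, -⟩ := pb_true'.mp (hsE'.symm.trans hs)
          have haf : askSecond m C u = some w := hpf.symm.trans hpuw
          have hone : some w = C.a u ∨ some w = C.b u := askSecond_mem' m C hmv haf
          have hin : inSNopt G m u (some w) := by
            rcases hone with h1 | h1
            · rw [h1]; exact hina
            · rw [h1]; exact hinb
          obtain ⟨hadj, hmw⟩ := inSNopt_some' G m hin
          refine ⟨w, hadj, hmw, ?_, singleP' G m hstep hmw hmu hadj hpwu hpuw⟩
          rw [hp, hL]; exact haf
        · by_cases g4 : guardResetMatch m C u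
          · have hL : localNext G m C u = ⟨none, C.a u, C.b u, false, false⟩ := by
              unfold localNext; rw [if_neg hmu, if_neg g1, if_neg g2, if_neg g3, if_pos g4]
            have hsE' : C'.s u = false := by rw [hsE, hL]
            rw [hsE'] at hs; exact Bool.noConfusion hs
          · exfalso
            rcases hstep.2.1 u huA with ⟨hnone, -⟩ | ⟨-, hg⟩
            · exact hmu hnone
            · rcases hg with hg | hg | hg | hg
              · exact g1 hg
              · exact g2 hg
              · exact g3 hg
              · exact g4 hg
  · have hInv := h.resolve_left huA
    have hloc := hstep.2.2.2 u huA
    have hp : C'.p u = C.p u := congrArg MMLocal.p hloc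
    have hsE : C'.s u = C.s u := congrArg MMLocal.s hloc
    obtain ⟨x, hadj, hmx, hpu, hpx⟩ := hInv (hsE.symm.trans hs)
    exact ⟨x, hadj, hmx, hp.trans hpu, singleP' G m hstep hmx hmu hadj hpx hpu⟩

end Aux

/-- After a matched vertex `u` has executed some rule, `s_u = True` implies
that `u` points to a single neighbor that points back to `u`. -/
theorem stmt15 {V : Type*} [Fintype V] [LinearOrder V]
    (G : SimpleGraph V) (m : V → Option V) (hm : MaxMatchingOn G m)
    (E : MMExecution G m) (u : V) (hu : m u ≠ none) (j : ℕ)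
    (h : ∃ i, i < j ∧ u ∈ E.act i)
    (hs : (E.cfg j).s u = true) :
    ∃ x : V, G.Adj u x ∧ m x = none ∧
      (E.cfg j).p u = some x ∧ (E.cfg j).p x = some u := by
  obtain ⟨i, hij, hact⟩ := h
  have H : ∀ k, i < k → Inv' G m (E.cfg k) u := by
    intro k
    induction k with
    | zero => intro hk; omega
    | succ n ih =>
      intro hk
      rcases E.valid n with hstep | ⟨hemp, -, heq⟩
      · rcases Nat.lt_succ_iff_lt_or_eq.mp hk with h1 | h1
        · exact inv_step' G m hstep hu (Or.inr (ih h1))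
        · exact inv_step' G m hstep hu (Or.inl (h1 ▸ hact))
      · rcases Nat.lt_succ_iff_lt_or_eq.mp hk with h1 | h1
        · rw [heq]; exact ih h1
        · exfalso; rw [h1, hemp] at hact; simpa using hact
  exact H j hij hs
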